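/- If (μ₁,…,μ_N) is a step C-compatible tuple, then r₁+⋯+r_N ≥ C + (r_k − l_k) for all k; moreover, if equality holds for some index m, then μ_k = λ[l_k,r_k] for all k and r_m − l_m = Σ_{i≠m}(r_i − l_i). -/

import Mathlib

open MeasureTheory

/-- `μ ∈ D[l,r]`: `μ = α·δ_l + ρ(x)dx` where `ρ` is nonnegative, nonincreasing on `[l,r]`
and vanishes outside `[l,r]` (the absolutely continuous part has total mass `1 − α`). -/
def memD (l r : ℝ) (μ : Measure ℝ) : Prop :=
  ∃ α : ℝ, 0 ≤ α ∧ α ≤ 1 ∧ ∃ ρ : ℝ → ℝ,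
    (∀ x, 0 ≤ ρ x) ∧ AntitoneOn ρ (Set.Icc l r) ∧ (∀ x ∉ Set.Icc l r, ρ x = 0) ∧
    μ = (ENNReal.ofReal α) • Measure.dirac l
          + volume.withDensity (fun x => ENNReal.ofReal (ρ x))

/-- `μ ∈ D_AC[l,r]`: `μ = ρ(x)dx` with `ρ` nonnegative, nonincreasing on `[l,r]`, vanishing
outside `[l,r]`. -/
def memDAC (l r : ℝ) (μ : Measure ℝ) : Prop :=
  ∃ ρ : ℝ → ℝ,
    (∀ x, 0 ≤ ρ x) ∧ AntitoneOn ρ (Set.Icc l r) ∧ (∀ x ∉ Set.Icc l r, ρ x = 0) ∧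
    μ = volume.withDensity (fun x => ENNReal.ofReal (ρ x))

/-- `λ[l,t]`: normalized Lebesgue measure on `[l,t]` for `l < t`, and `δ_l` for `t = l`. -/
noncomputable def lam (l t : ℝ) : Measure ℝ :=
  if l < t then (ENNReal.ofReal (t - l))⁻¹ • volume.restrict (Set.Icc l t)
  else Measure.dirac l


/-- A pair of N-tuples (l, r) is a C-compatible boundary if 0 ≤ r_k − l_k ≤ C − Σᵢ lᵢ. -/
def CompatBoundary {N : ℕ} (C : ℝ) (l r : Fin N → ℝ) : Prop :=
  ∀ k, 0 ≤ r k - l k ∧ r k - l k ≤ C - ∑ i, l i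

/-- The tuple μ belongs to V^N[C]: Σ 𝔼(μ_k) = C and μ_k ∈ D[l_k,r_k] for some C-compatible
boundary (l,r). -/
def memV {N : ℕ} (C : ℝ) (μ : Fin N → MeasureTheory.Measure ℝ) : Prop :=
  (∑ k, ∫ x, x ∂(μ k)) = C ∧
  ∃ l r : Fin N → ℝ, CompatBoundary C l r ∧ ∀ k, memD (l k) (r k) (μ k)

/-- a step C-compatible tuple satisfies Σ r_i ≥ C + (r_k − l_k) for all k; if
equality holds for some m then μ_k = λ[l_k,r_k] for all k and r_m − l_m = Σ_{i≠m}(r_i−l_i). -/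
lemma integrable_id_lam (l t : ℝ) : Integrable (fun x : ℝ => x) (lam l t) := by
  unfold lam
  split_ifs with h
  · exact (continuous_id.integrableOn_Icc).integrable.smul_measure
      (ENNReal.inv_ne_top.2 (ENNReal.ofReal_pos.2 (by linarith)).ne')
  · exact (integrable_const l).congr (ae_eq_dirac (fun x : ℝ => x)).symm

lemma lam_mean (l t : ℝ) (h : l ≤ t) : ∫ x, x ∂(lam l t) = (l + t)/2 := by
  unfold lam
  split_ifs with hlt
  · rw [integral_smul_measure, integral_Icc_eq_integral_Ioc,
      ← intervalIntegral.integral_of_le hlt.le, integral_id,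
      ENNReal.toReal_inv, ENNReal.toReal_ofReal (by linarith)]
    have h0 : t - l ≠ 0 := by intro hh; linarith [hlt]
    field_simp
    linear_combination (t + l) * (inv_mul_cancel₀ h0)
  · have ht : t = l := le_antisymm (not_lt.mp hlt) h
    subst ht
    rw [integral_dirac]
    ring

lemma mu_mean (l p r a : ℝ) (ha : 0 ≤ a) (hb : 0 ≤ 1 - a) (hlp : l ≤ p) (hlr : l ≤ r) :
    ∫ x, x ∂(ENNReal.ofReal a • lam l p + ENNReal.ofReal (1 - a) • lam l r)
      = a * ((l + p)/2) + (1 - a) * ((l + r)/2) := by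
  rw [integral_add_measure
      ((integrable_id_lam l p).smul_measure ENNReal.ofReal_ne_top)
      ((integrable_id_lam l r).smul_measure ENNReal.ofReal_ne_top),
    integral_smul_measure, integral_smul_measure,
    ENNReal.toReal_ofReal ha, ENNReal.toReal_ofReal hb,
    lam_mean l p hlp, lam_mean l r hlr]
  simp

lemma combine (a : ℝ) (h0 : 0 ≤ a) (h1 : a ≤ 1) (ν : Measure ℝ) :
    ENNReal.ofReal a • ν + ENNReal.ofReal (1 - a) • ν = ν := by
  rw [← add_smul, ← ENNReal.ofReal_add h0 (by linarith)]
  norm_num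

lemma sum_mean {N : ℕ} (C : ℝ) (l r p α : Fin N → ℝ) (μ : Fin N → MeasureTheory.Measure ℝ)
    (hb : CompatBoundary C l r)
    (hp : ∀ k, l k ≤ p k ∧ p k ≤ r k) (hα : ∀ k, 0 < α k ∧ α k < 1)
    (hμ : ∀ k, μ k = ENNReal.ofReal (α k) • lam (l k) (p k)
                    + ENNReal.ofReal (1 - α k) • lam (l k) (r k))
    (hE : (∑ k, ∫ x, x ∂(μ k)) = C) :
    C = (∑ i, l i) + (∑ i, (r i - l i))/2 - ∑ i, α i * (r i - p i)/2 := by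
  have hmean : ∀ k, ∫ x, x ∂(μ k)
      = l k + (r k - l k)/2 - α k * (r k - p k)/2 := by
    intro k
    rw [hμ k, mu_mean _ _ _ _ (hα k).1.le (by linarith [(hα k).2]) (hp k).1
      (le_trans (hp k).1 (hp k).2)]
    ring
  rw [← hE, Finset.sum_congr rfl fun k _ => hmean k, Finset.sum_sub_distrib,
    Finset.sum_add_distrib, Finset.sum_div]

theorem stmt14 {N : ℕ} (C : ℝ) (l r p α : Fin N → ℝ) (μ : Fin N → Measure ℝ)
    (hb : CompatBoundary C l r)
    (hp : ∀ k, l k ≤ p k ∧ p k ≤ r k) (hα : ∀ k, 0 < α k ∧ α k < 1)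
    (hμ : ∀ k, μ k = ENNReal.ofReal (α k) • lam (l k) (p k)
                    + ENNReal.ofReal (1 - α k) • lam (l k) (r k))
    (hE : (∑ k, ∫ x, x ∂(μ k)) = C) :
    (∀ k, C + (r k - l k) ≤ ∑ i, r i) ∧
      (∀ m, (∑ i, r i) = C + (r m - l m) →
        (∀ k, μ k = lam (l k) (r k)) ∧
          r m - l m = ∑ i ∈ Finset.univ.erase m, (r i - l i)) := by
  have hC := sum_mean C l r p α μ hb hp hα hμ hE
  have hdnn : ∀ k, 0 ≤ α k * (r k - p k)/2 := fun k =>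
    div_nonneg (mul_nonneg (hα k).1.le (by linarith [(hp k).2])) two_pos.le
  have hDnn : 0 ≤ ∑ i, α i * (r i - p i)/2 := Finset.sum_nonneg fun i _ => hdnn i
  have hsumr : ∑ i, r i = ∑ i, l i + ∑ i, (r i - l i) := by
    rw [← Finset.sum_add_distrib]; simp
  constructor
  · intro k
    have h2 := (hb k).2
    linarith
  · intro m hm
    have h2 := (hb m).2
    have hD0 : ∑ i, α i * (r i - p i)/2 = 0 := by linarith
    have hd0 : ∀ k, α k * (r k - p k)/2 = 0 := fun k =>
      (Finset.sum_eq_zero_iff_of_nonneg fun i _ => hdnn i).1 hD0 k (Finset.mem_univ k)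
    have hpr : ∀ k, p k = r k := by
      intro k
      have h' : α k * (r k - p k) = 0 := by linarith [hd0 k]
      rcases mul_eq_zero.1 h' with h'' | h''
      · exact absurd h'' (hα k).1.ne'
      · linarith
    refine ⟨fun k => by rw [hμ k, hpr k, combine (α k) (hα k).1.le (hα k).2.le], ?_⟩
    have herase := Finset.add_sum_erase Finset.univ (fun i => r i - l i) (Finset.mem_univ m)
    linarith
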